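/- The honeycomb toroidal graph HTG(1, n, ℓ) (with n ≥ 4 even, ℓ odd, 0 ≤ ℓ ≤ n/2) is a 3-RDR graph if and only if n ≡ 0 (mod 6) and ℓ ≡ 3 (mod 6). -/

import Mathlib

open SimpleGraph Finset

/-- A `k`-rainbow dominating function on a graph `G`: whenever `f v = ∅`,
every color appears on some neighbor of `v`. -/
def IsKRDF {V : Type*} (G : SimpleGraph V) (k : ℕ) (f : V → Finset (Fin k)) : Prop :=
  ∀ v, f v = ∅ → ∀ c : Fin k, ∃ u, G.Adj v u ∧ c ∈ f u

/-- The weight of a rainbow dominating function. -/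
def rdfWeight {V : Type*} [Fintype V] {k : ℕ} (f : V → Finset (Fin k)) : ℕ :=
  ∑ v, (f v).card

/-- The `k`-rainbow domination number of `G`. -/
noncomputable def rainbowDomNum {V : Type*} [Fintype V] (G : SimpleGraph V) (k : ℕ) : ℕ :=
  sInf {w | ∃ f, IsKRDF G k f ∧ rdfWeight f = w}

/-- One-directional adjacency relation of the honeycomb toroidal graph
`HTG(m,n,ℓ)`: vertical edges, horizontal edges and jumps. -/
def HTGRel (m n ℓ : ℕ) [NeZero m] [NeZero n]
    (x y : ZMod m × ZMod n) : Prop :=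
  (y.1 = x.1 ∧ y.2 = x.2 + 1) ∨
  (x.1.val < m - 1 ∧ y.1 = x.1 + 1 ∧ y.2 = x.2 ∧ (x.1.val + 1) % 2 = x.2.val % 2) ∨
  (x.1.val = m - 1 ∧ y.1 = 0 ∧ y.2 = x.2 + (ℓ : ZMod n) ∧ x.2.val % 2 = m % 2)

/-- The honeycomb toroidal graph `HTG(m,n,ℓ)` on vertex set `ZMod m × ZMod n`. -/
def HTG (m n ℓ : ℕ) [NeZero m] [NeZero n] : SimpleGraph (ZMod m × ZMod n) where
  Adj x y := x ≠ y ∧ (HTGRel m n ℓ x y ∨ HTGRel m n ℓ y x)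
  symm := by constructor; rintro x y ⟨hne, h⟩; exact ⟨hne.symm, h.symm⟩
  loopless := by constructor; rintro x ⟨hne, -⟩; exact hne rfl

open scoped Classical in
/-- A graph is `3`-RDR if it is cubic and its `3`-rainbow domination number equals
half the number of vertices. -/
def Is3RDR {V : Type*} [Fintype V] (X : SimpleGraph V) : Prop :=
  X.IsRegularOfDegree 3 ∧ 2 * rainbowDomNum X 3 = Fintype.card V

lemma htgrel1_iff {n ℓ : ℕ} [NeZero n] (x y : ZMod 1 × ZMod n) :
    HTGRel 1 n ℓ x y ↔ (y.2 = x.2 + 1 ∨ (x.2.val % 2 = 1 ∧ y.2 = x.2 + (ℓ : ZMod n))) := by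
  have h1 : ∀ a b : ZMod 1, a = b := fun a b => Subsingleton.elim a b
  have hv : x.1.val = 0 := by
    have := ZMod.val_lt x.1; omega
  unfold HTGRel
  constructor
  · rintro (⟨-, h⟩ | ⟨h, -⟩ | ⟨-, -, h, hp⟩)
    · exact Or.inl h
    · omega
    · exact Or.inr ⟨by omega, h⟩
  · rintro (h | ⟨hp, h⟩)
    · exact Or.inl ⟨h1 _ _, h⟩
    · exact Or.inr (Or.inr ⟨by omega, h1 _ _, h, by omega⟩)

lemma HTG1_adj {n ℓ : ℕ} [NeZero n] (v u : ZMod 1 × ZMod n) :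
    (HTG 1 n ℓ).Adj v u ↔ v.2 ≠ u.2 ∧
      (u.2 = v.2 + 1 ∨ v.2 = u.2 + 1 ∨
       (v.2.val % 2 = 1 ∧ u.2 = v.2 + (ℓ : ZMod n)) ∨
       (u.2.val % 2 = 1 ∧ v.2 = u.2 + (ℓ : ZMod n))) := by
  have hne : v ≠ u ↔ v.2 ≠ u.2 := by
    constructor
    · intro h h2; exact h (Prod.ext (Subsingleton.elim _ _) h2)
    · intro h h2; exact h (congrArg Prod.snd h2)
  show (v ≠ u ∧ _) ↔ _
  rw [hne, htgrel1_iff, htgrel1_iff]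
  tauto

section Parity
variable {n : ℕ} [NeZero n] (h2 : (2:ℕ) ∣ n)

lemma pz_val (x : ZMod n) : (ZMod.castHom h2 (ZMod 2) x).val = x.val % 2 := by
  rw [ZMod.castHom_apply, ← ZMod.natCast_val, ZMod.val_natCast]

lemma pz_odd (x : ZMod n) : x.val % 2 = 1 ↔ ZMod.castHom h2 (ZMod 2) x = 1 := by
  rw [← pz_val h2]
  have : ∀ a : ZMod 2, a.val = 1 ↔ a = 1 := by decide
  exact this _

lemma pz_even (x : ZMod n) : x.val % 2 = 0 ↔ ZMod.castHom h2 (ZMod 2) x = 0 := by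
  rw [← pz_val h2]
  have : ∀ a : ZMod 2, a.val = 0 ↔ a = 0 := by decide
  exact this _

lemma pz_natCast (k : ℕ) : ZMod.castHom h2 (ZMod 2) (k : ZMod n) = (k : ZMod 2) :=
  map_natCast _ k

lemma pz_two : ZMod.castHom h2 (ZMod 2) (2 : ZMod n) = 0 := by
  have : ((2:ℕ) : ZMod n) = (2 : ZMod n) := by push_cast; ring
  rw [← this, pz_natCast]
  decide

end Parity

open scoped Classical in
lemma rdf_counting {V : Type*} [Fintype V] (G : SimpleGraph V)
    (hreg : G.IsRegularOfDegree 3) (f : V → Finset (Fin 3)) (hf : IsKRDF G 3 f) :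
    Fintype.card V ≤ 2 * rdfWeight f ∧
    (2 * rdfWeight f = Fintype.card V →
      ((∀ v, ¬ f v = ∅ → (f v).card = 1) ∧
       (∀ v u, ¬ f v = ∅ → G.Adj v u → f u = ∅) ∧
       2 * (univ.filter (fun v => ¬ f v = ∅)).card = Fintype.card V)) := by
  set w := rdfWeight f with hw
  set S := univ.filter (fun v => ¬ f v = ∅) with hSdef
  set E := univ.filter (fun v => f v = ∅) with hEdef
  have hone : ∀ v ∈ S, 1 ≤ (f v).card := by
    intro v hv
    rw [hSdef, Finset.mem_filter] at hv
    exact Finset.card_pos.mpr (Finset.nonempty_iff_ne_empty.mpr hv.2)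
  have hsum_split : ∑ v ∈ E, (f v).card + ∑ v ∈ S, (f v).card = w := by
    rw [hw, rdfWeight]
    exact Finset.sum_filter_add_sum_filter_not univ _ _
  have hEzero : ∑ v ∈ E, (f v).card = 0 := by
    apply Finset.sum_eq_zero
    intro v hv
    rw [hEdef, Finset.mem_filter] at hv
    rw [hv.2]; rfl
  have hsumS : ∑ v ∈ S, (f v).card = w := by omega
  have hcardS : S.card ≤ w := by
    calc S.card = ∑ v ∈ S, 1 := by rw [Finset.card_eq_sum_ones]
    _ ≤ ∑ v ∈ S, (f v).card := Finset.sum_le_sum hone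
    _ = w := hsumS
  have hN3 : ∀ v ∈ E, 3 ≤ ∑ u ∈ G.neighborFinset v, (f u).card := by
    intro v hv
    rw [hEdef, Finset.mem_filter] at hv
    have hsub : (univ : Finset (Fin 3)) ⊆ (G.neighborFinset v).biUnion (fun u => f u) := by
      intro c _
      obtain ⟨u, hadj, hc⟩ := hf v hv.2 c
      exact Finset.mem_biUnion.mpr ⟨u, (G.mem_neighborFinset v u).mpr hadj, hc⟩
    calc (3:ℕ) = (univ : Finset (Fin 3)).card := by simp
    _ ≤ ((G.neighborFinset v).biUnion (fun u => f u)).card := Finset.card_le_card hsub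
    _ ≤ ∑ u ∈ G.neighborFinset v, (f u).card := Finset.card_biUnion_le
  have hnf : ∀ v : V, G.neighborFinset v = univ.filter (G.Adj v) := by
    intro v; ext u; simp [SimpleGraph.mem_neighborFinset]
  have hdouble : ∑ v, ∑ u ∈ G.neighborFinset v, (f u).card = 3 * w := by
    have h1 : ∀ v : V, ∑ u ∈ G.neighborFinset v, (f u).card
        = ∑ u, if G.Adj v u then (f u).card else 0 := by
      intro v; rw [hnf v, Finset.sum_filter]
    calc ∑ v, ∑ u ∈ G.neighborFinset v, (f u).card
        = ∑ v, ∑ u, if G.Adj v u then (f u).card else 0 := by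
          exact Finset.sum_congr rfl (fun v _ => h1 v)
      _ = ∑ u, ∑ v, if G.Adj v u then (f u).card else 0 := Finset.sum_comm
      _ = ∑ u : V, 3 * (f u).card := by
          apply Finset.sum_congr rfl
          intro u _
          rw [← Finset.sum_filter]
          rw [Finset.sum_const]
          have : univ.filter (fun v => G.Adj v u) = G.neighborFinset u := by
            rw [hnf u]; ext v; simp [SimpleGraph.adj_comm]
          rw [this]
          have hdeg : (G.neighborFinset u).card = 3 := hreg u
          rw [hdeg]; ring
      _ = 3 * w := by rw [hw, rdfWeight, Finset.mul_sum]
  have hdsplit : ∑ v ∈ E, (∑ u ∈ G.neighborFinset v, (f u).card)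
      + ∑ v ∈ S, (∑ u ∈ G.neighborFinset v, (f u).card) = 3 * w := by
    rw [← hdouble]
    exact Finset.sum_filter_add_sum_filter_not univ _ _
  have hcardE3 : 3 * E.card ≤ ∑ v ∈ E, ∑ u ∈ G.neighborFinset v, (f u).card := by
    calc 3 * E.card = ∑ _v ∈ E, 3 := by rw [Finset.sum_const]; ring
    _ ≤ _ := Finset.sum_le_sum hN3
  have hcardE : E.card ≤ w := by
    have : ∑ v ∈ E, ∑ u ∈ G.neighborFinset v, (f u).card ≤ 3 * w := by omega
    omega
  have hcards : E.card + S.card = Fintype.card V := by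
    rw [hEdef, hSdef, ← Finset.card_univ]
    exact Finset.card_filter_add_card_filter_not _
  refine ⟨by omega, ?_⟩
  intro heq
  have hSw : S.card = w := by omega
  have hEw : E.card = w := by omega
  have hall1 : ∀ v, ¬ f v = ∅ → (f v).card = 1 := by
    intro v hv
    by_contra hcon
    have hvS : v ∈ S := by rw [hSdef, Finset.mem_filter]; exact ⟨Finset.mem_univ v, hv⟩
    have h2 : 2 ≤ (f v).card := by
      have := hone v hvS; omega
    have hbig : w ≥ (S.erase v).card + 2 := by
      calc w = ∑ u ∈ S, (f u).card := hsumS.symm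
      _ = ∑ u ∈ S.erase v, (f u).card + (f v).card := (Finset.sum_erase_add S _ hvS).symm
      _ ≥ (S.erase v).card + 2 := by
          have : (S.erase v).card ≤ ∑ u ∈ S.erase v, (f u).card := by
            rw [Finset.card_eq_sum_ones]
            exact Finset.sum_le_sum (fun u hu => hone u (Finset.mem_of_mem_erase hu))
          omega
    have : (S.erase v).card = S.card - 1 := Finset.card_erase_of_mem hvS
    have hS1 : 1 ≤ S.card := Finset.card_pos.mpr ⟨v, hvS⟩
    omega
  refine ⟨hall1, ?_, by omega⟩
  have hSzero : ∑ v ∈ S, ∑ u ∈ G.neighborFinset v, (f u).card = 0 := by omega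
  intro v u hv hadj
  have hvS : v ∈ S := by rw [hSdef, Finset.mem_filter]; exact ⟨Finset.mem_univ v, hv⟩
  have hinner : ∑ u ∈ G.neighborFinset v, (f u).card = 0 :=
    (Finset.sum_eq_zero_iff.mp hSzero) v hvS
  have huN : u ∈ G.neighborFinset v := (G.mem_neighborFinset v u).mpr hadj
  have := (Finset.sum_eq_zero_iff.mp hinner) u huN
  exact Finset.card_eq_zero.mp this
open SimpleGraph Finset

section Consts
variable {n : ℕ} [NeZero n]

lemma zc_ne_zero {a : ℕ} (h0 : 0 < a) (hlt : a < n) : ((a:ℕ) : ZMod n) ≠ 0 := by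
  rw [Ne, ZMod.natCast_eq_zero_iff]
  intro hd
  have := Nat.le_of_dvd h0 hd
  omega

lemma z_one_ne_zero (hn : 2 ≤ n) : (1 : ZMod n) ≠ 0 := by
  have : ((1:ℕ) : ZMod n) ≠ 0 := zc_ne_zero (by omega) (by omega)
  simpa using this

lemma z_self_ne_add_one (hn : 2 ≤ n) (x : ZMod n) : x ≠ x + 1 := by
  intro h
  exact z_one_ne_zero hn (by linear_combination h.symm)

lemma z_self_ne_sub_one (hn : 2 ≤ n) (x : ZMod n) : x ≠ x - 1 := by
  intro h
  exact z_one_ne_zero hn (by linear_combination h)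

lemma zl_ne_zero {ℓ : ℕ} (h0 : 0 < ℓ) (hlt : ℓ < n) : ((ℓ:ℕ) : ZMod n) ≠ 0 :=
  zc_ne_zero h0 hlt

end Consts

open scoped Classical in
lemma HTG1_regular {n ℓ : ℕ} [NeZero n] (hn4 : 4 ≤ n) (hne : n % 2 = 0)
    (hlo : ℓ % 2 = 1) (hl2 : 2 * ℓ ≤ n) (hl3 : 3 ≤ ℓ) :
    (HTG 1 n ℓ).IsRegularOfDegree 3 := by
  have h2 : (2:ℕ) ∣ n := ⟨n/2, by omega⟩
  have hln : ℓ < n := by omega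
  have hl0 : ((ℓ:ℕ) : ZMod n) ≠ 0 := zl_ne_zero (by omega) hln
  have hl1 : ((ℓ:ℕ) : ZMod n) ≠ 1 := by
    rw [show (1 : ZMod n) = ((1:ℕ) : ZMod n) by simp, Ne, ZMod.natCast_eq_natCast_iff']
    rw [Nat.mod_eq_of_lt hln, Nat.mod_eq_of_lt (by omega)]
    omega
  have hlm1 : ((ℓ:ℕ) : ZMod n) ≠ -1 := by
    intro h
    have : ((ℓ + 1 : ℕ) : ZMod n) = 0 := by push_cast; rw [h]; ring
    rw [ZMod.natCast_eq_zero_iff] at this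
    have := Nat.le_of_dvd (by omega) this
    omega
  have h21 : ((2:ℕ) : ZMod n) ≠ 0 := zc_ne_zero (by omega) (by omega)
  intro v
  -- the jump target
  by_cases hpar : v.2.val % 2 = 1
  case pos =>
    have hnbr : (HTG 1 n ℓ).neighborFinset v =
        {((0 : ZMod 1), v.2 + 1), (0, v.2 - 1), (0, v.2 + (ℓ:ℕ))} := by
      ext u
      rw [SimpleGraph.mem_neighborFinset, HTG1_adj]
      simp only [Finset.mem_insert, Finset.mem_singleton, Prod.ext_iff]
      have hu1 : ∀ a : ZMod 1, u.1 = a := fun a => Subsingleton.elim _ _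
      constructor
      · rintro ⟨hnev, (h | h | ⟨-, h⟩ | ⟨hodd, h⟩)⟩
        · exact Or.inl ⟨hu1 _, h⟩
        · refine Or.inr (Or.inl ⟨hu1 _, ?_⟩); rw [h]; ring
        · exact Or.inr (Or.inr ⟨hu1 _, h⟩)
        · -- u odd and v.2 = u.2 + ℓ : parity contradiction
          exfalso
          have hv2 := (pz_odd h2 v.2).mp hpar
          have hu2 := (pz_odd h2 u.2).mp hodd
          have : ZMod.castHom h2 (ZMod 2) v.2 =
              ZMod.castHom h2 (ZMod 2) u.2 + ZMod.castHom h2 (ZMod 2) ((ℓ:ℕ) : ZMod n) := by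
            rw [← map_add]; exact congrArg _ h
          rw [hv2, hu2, pz_natCast] at this
          have hl2' : ((ℓ:ℕ) : ZMod 2) = 1 := by
            rw [← ZMod.natCast_mod, hlo]; rfl
          rw [hl2'] at this
          exact absurd this (by decide)
      · rintro (⟨-, h⟩ | ⟨-, h⟩ | ⟨-, h⟩)
        · exact ⟨by rw [h]; exact z_self_ne_add_one (by omega) _, Or.inl h⟩
        · refine ⟨by rw [h]; exact z_self_ne_sub_one (by omega) _, Or.inr (Or.inl ?_)⟩
          rw [h]; ring
        · refine ⟨?_, Or.inr (Or.inr (Or.inl ⟨hpar, h⟩))⟩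
          rw [h]; intro hc
          exact hl0 (by linear_combination hc.symm)
    have d12 : v.2 + 1 ≠ v.2 - 1 := fun hc => h21 (by push_cast; linear_combination hc)
    have d13 : v.2 + 1 ≠ v.2 + ((ℓ:ℕ) : ZMod n) := fun hc => hl1 (by linear_combination -hc)
    have d23 : v.2 - 1 ≠ v.2 + ((ℓ:ℕ) : ZMod n) := fun hc => hlm1 (by linear_combination -hc)
    rw [SimpleGraph.degree, hnbr]
    exact Finset.card_eq_three.mpr ⟨_, _, _, fun h => d12 (congrArg Prod.snd h),
      fun h => d13 (congrArg Prod.snd h), fun h => d23 (congrArg Prod.snd h), rfl⟩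
  case neg =>
    have hpe : v.2.val % 2 = 0 := by omega
    have hnbr : (HTG 1 n ℓ).neighborFinset v =
        {((0 : ZMod 1), v.2 + 1), (0, v.2 - 1), (0, v.2 - (ℓ:ℕ))} := by
      ext u
      rw [SimpleGraph.mem_neighborFinset, HTG1_adj]
      simp only [Finset.mem_insert, Finset.mem_singleton, Prod.ext_iff]
      have hu1 : ∀ a : ZMod 1, u.1 = a := fun a => Subsingleton.elim _ _
      constructor
      · rintro ⟨hnev, (h | h | ⟨hodd, h⟩ | ⟨-, h⟩)⟩
        · exact Or.inl ⟨hu1 _, h⟩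
        · refine Or.inr (Or.inl ⟨hu1 _, ?_⟩); rw [h]; ring
        · omega
        · refine Or.inr (Or.inr ⟨hu1 _, ?_⟩); rw [h]; ring
      · rintro (⟨-, h⟩ | ⟨-, h⟩ | ⟨-, h⟩)
        · exact ⟨by rw [h]; exact z_self_ne_add_one (by omega) _, Or.inl h⟩
        · refine ⟨by rw [h]; exact z_self_ne_sub_one (by omega) _, Or.inr (Or.inl ?_)⟩
          rw [h]; ring
        · refine ⟨?_, Or.inr (Or.inr (Or.inr ⟨?_, ?_⟩))⟩
          · rw [h]; intro hc
            exact hl0 (by linear_combination hc)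
          · -- u.2 = v.2 - ℓ is odd
            rw [pz_odd h2, h, map_sub, pz_natCast]
            have hv2 := (pz_even h2 v.2).mp hpe
            have hl2' : ((ℓ:ℕ) : ZMod 2) = 1 := by
              rw [← ZMod.natCast_mod, hlo]; rfl
            rw [hv2, hl2']
            decide
          · rw [h]; ring
    have d12 : v.2 + 1 ≠ v.2 - 1 := fun hc => h21 (by push_cast; linear_combination hc)
    have d13 : v.2 + 1 ≠ v.2 - ((ℓ:ℕ) : ZMod n) := fun hc => hlm1 (by linear_combination hc)
    have d23 : v.2 - 1 ≠ v.2 - ((ℓ:ℕ) : ZMod n) := fun hc => hl1 (by linear_combination hc)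
    rw [SimpleGraph.degree, hnbr]
    exact Finset.card_eq_three.mpr ⟨_, _, _, fun h => d12 (congrArg Prod.snd h),
      fun h => d13 (congrArg Prod.snd h), fun h => d23 (congrArg Prod.snd h), rfl⟩

lemma z3_eq_of : ∀ a b : ZMod 3, a ≠ 0 → b ≠ 0 → -(a+b) ≠ 0 → a = b := by decide

lemma z3_mul_eq_zero : ∀ a b : ZMod 3, a ≠ 0 → b * a = 0 → b = 0 := by decide

lemma z3_three : ∀ z : ZMod 3, z + z + z = 0 := by decide

lemma tri : ∀ p q r : Fin 3, (∀ γ : Fin 3, γ = p ∨ γ = q ∨ γ = r) →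
    (((p.val:ℕ) : ZMod 3) ≠ ((q.val:ℕ):ZMod 3) ∧
     ((p.val:ℕ):ZMod 3) + ((q.val:ℕ):ZMod 3) + ((r.val:ℕ):ZMod 3) = 0) := by decide

lemma chain {n : ℕ} [NeZero n] (s : ZMod n) (Q : ZMod n → Prop) (c : ZMod n → ZMod 3)
    (hQ2 : ∀ x, Q x → Q (x + 2)) (hQs : ∀ x, Q x → Q (x + s))
    (hne : ∀ x, Q x → c x ≠ c (x + 2))
    (hsum : ∀ x, Q x → c x + c (x + 2) + c (x + s) = 0)
    (b : ZMod n) (hb : Q b) :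
    (c (b + 2) - c b ≠ 0) ∧ ∀ k : ℕ, c (b + 2 * k) = c b + k * (c (b + 2) - c b) := by
  have hd : ∀ x, Q x → c (x + 2) - c x ≠ 0 := fun x hx => sub_ne_zero.mpr (hne x hx).symm
  have hconst : ∀ x, Q x → c (x + 2 + 2) - c (x + 2) = c (x + 2) - c x := by
    intro x hx
    have h1 := hsum x hx
    have h2 := hsum (x + 2) (hQ2 x hx)
    have h3 := hd (x + s) (hQs x hx)
    have harg : x + 2 + s = x + s + 2 := by ring
    rw [harg] at h2
    have hthird : -((c (x + 2 + 2) - c (x + 2)) + (c (x + 2) - c x)) ≠ 0 := by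
      intro hcon
      apply h3
      linear_combination hcon - h1 + h2
    exact z3_eq_of _ _ (hd (x+2) (hQ2 x hx)) (hd x hx) hthird
  refine ⟨hd b hb, ?_⟩
  have main : ∀ k : ℕ, Q (b + 2 * k) ∧
      (c (b + 2 * k + 2) - c (b + 2 * k) = c (b + 2) - c b) ∧
      c (b + 2 * k) = c b + k * (c (b + 2) - c b) := by
    intro k
    induction k with
    | zero => refine ⟨by simpa using hb, by norm_num, by norm_num⟩
    | succ m ih =>
      obtain ⟨hQm, hdm, hcm⟩ := ih
      have hstep : b + 2 * ((m+1 : ℕ) : ZMod n) = (b + 2 * (m:ℕ)) + 2 := by push_cast; ring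
      refine ⟨?_, ?_, ?_⟩
      · rw [hstep]; exact hQ2 _ hQm
      · rw [hstep, hconst _ hQm]; exact hdm
      · rw [hstep]
        have hc2 : c ((b + 2 * (m:ℕ)) + 2) = c (b + 2 * (m:ℕ)) + (c (b+2) - c b) := by
          linear_combination hdm
        rw [hc2, hcm]; push_cast; ring
  exact fun k => (main k).2.2

open scoped Classical in
lemma forward_analysis {n ℓ : ℕ} [NeZero n] (hn4 : 4 ≤ n) (hne : n % 2 = 0)
    (hlo : ℓ % 2 = 1) (hl2 : 2 * ℓ ≤ n)
    (F : ZMod n → Finset (Fin 3))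
    (hf : ∀ x, F x = ∅ → ∀ γ : Fin 3, ∃ u : ZMod 1 × ZMod n,
        (HTG 1 n ℓ).Adj ((0 : ZMod 1), x) u ∧ γ ∈ F u.2)
    (H1 : ∀ x, ¬ F x = ∅ → (F x).card = 1)
    (H2 : ∀ x y : ZMod n, ¬ F x = ∅ → (HTG 1 n ℓ).Adj ((0 : ZMod 1), x) ((0 : ZMod 1), y) → F y = ∅)
    (H3 : 2 * (univ.filter (fun x : ZMod n => ¬ F x = ∅)).card = n) :
    n % 6 = 0 ∧ ℓ % 6 = 3 := by
  have h2 : (2:ℕ) ∣ n := ⟨n/2, by omega⟩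
  set P := ZMod.castHom h2 (ZMod 2) with hPdef
  set S := univ.filter (fun x : ZMod n => ¬ F x = ∅) with hSdef
  have hEcard : 2 * (univ.filter (fun x : ZMod n => F x = ∅)).card = n := by
    have hcu : (univ : Finset (ZMod n)).card = n := by
      rw [Finset.card_univ, ZMod.card]
    have hsplit := Finset.card_filter_add_card_filter_not
      (s := (univ : Finset (ZMod n))) (p := fun x : ZMod n => F x = ∅)
    rw [hcu, ← hSdef] at hsplit
    omega
  have hadj_succ : ∀ x : ZMod n, (HTG 1 n ℓ).Adj ((0 : ZMod 1), x) (0, x + 1) := by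
    intro x
    rw [HTG1_adj]
    exact ⟨z_self_ne_add_one (by omega) x, Or.inl rfl⟩
  have hstep : ∀ x : ZMod n, ¬ F x = ∅ → F (x + 1) = ∅ := by
    intro x hx
    exact H2 x (x+1) hx (hadj_succ x)
  have hsurj : (S.image (fun x => x + 1)) = univ.filter (fun x : ZMod n => F x = ∅) := by
    apply Finset.eq_of_subset_of_card_le
    · intro y hy
      obtain ⟨x, hx, rfl⟩ := Finset.mem_image.mp hy
      rw [hSdef, Finset.mem_filter] at hx
      exact Finset.mem_filter.mpr ⟨Finset.mem_univ _, hstep x hx.2⟩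
    · rw [Finset.card_image_of_injective _ (add_left_injective 1)]
      omega
  have halt : ∀ x : ZMod n, ¬ F x = ∅ ↔ F (x + 1) = ∅ := by
    intro x
    constructor
    · exact hstep x
    · intro hx1
      have hmem : x + 1 ∈ S.image (fun x => x + 1) := by
        rw [hsurj, Finset.mem_filter]; exact ⟨Finset.mem_univ _, hx1⟩
      obtain ⟨x', hx', hxe⟩ := Finset.mem_image.mp hmem
      have hxx : x' = x := add_left_injective 1 hxe
      rw [hSdef, Finset.mem_filter] at hx'
      rw [← hxx]; exact hx'.2
  have hpar : ∀ k : ℕ, (¬ F ((k:ℕ) : ZMod n) = ∅ ↔ (¬ F 0 = ∅ ↔ k % 2 = 0)) := by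
    intro k
    induction k with
    | zero => simp
    | succ m ih =>
      have hcast : ((m+1 : ℕ) : ZMod n) = ((m:ℕ) : ZMod n) + 1 := by push_cast; ring
      rw [hcast]
      have hiff : ¬ F (((m:ℕ):ZMod n) + 1) = ∅ ↔ ¬ ¬ F ((m:ℕ):ZMod n) = ∅ := by
        constructor
        · intro h hm; exact h ((halt _).mp hm)
        · intro h h1; exact h ((halt _).mpr h1)
      have hm2 : ((m+1) % 2 = 0) ↔ ¬ (m % 2 = 0) := by omega
      rw [hiff, ih, hm2]
      tauto
  have hparity : ∀ x : ZMod n, ¬ F x = ∅ ↔ (¬ F 0 = ∅ ↔ x.val % 2 = 0) := by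
    intro x
    have := hpar x.val
    rwa [ZMod.natCast_zmod_val] at this
  have hP1 : P (1 : ZMod n) = 1 := map_one P
  have hPl : P ((ℓ:ℕ) : ZMod n) = 1 := by
    rw [hPdef, pz_natCast, ← ZMod.natCast_mod, hlo]; rfl
  have hP2 : ∀ x : ZMod n, P (x + 2) = P x := by
    intro x
    have h11 : x + 2 = x + 1 + 1 := by ring
    rw [h11, map_add, map_add, map_one]
    have : ∀ a : ZMod 2, a + 1 + 1 = a := by decide
    exact this _
  have hoddv : ∀ x : ZMod n, x.val % 2 = 1 ↔ P x = 1 := fun x => pz_odd h2 x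
  set c : ZMod n → ZMod 3 := fun y => ∑ i ∈ F y, ((i.val:ℕ) : ZMod 3) with hcdef
  have hcval : ∀ (y : ZMod n) (p : Fin 3), F y = {p} → c y = ((p.val:ℕ) : ZMod 3) := by
    intro y p hp
    rw [hcdef]
    simp [hp]
  have hsingle : ∀ y : ZMod n, ¬ F y = ∅ → ∃ p : Fin 3, F y = {p} ∧ c y = ((p.val:ℕ) : ZMod 3) := by
    intro y hy
    obtain ⟨p, hp⟩ := Finset.card_eq_one.mp (H1 y hy)
    exact ⟨p, hp, hcval y p hp⟩
  have hclass : ∀ (x : ZMod n) (u : ZMod 1 × ZMod n), (HTG 1 n ℓ).Adj ((0 : ZMod 1), x) u →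
      u.2 = x + 1 ∨ u.2 = x - 1 ∨ (x.val % 2 = 1 ∧ u.2 = x + ℓ)
        ∨ (u.2.val % 2 = 1 ∧ u.2 = x - ℓ) := by
    intro x u hadj
    rw [HTG1_adj] at hadj
    obtain ⟨-, (h | h | ⟨hp, h⟩ | ⟨hp, h⟩)⟩ := hadj
    · exact Or.inl h
    · have h' : x = u.2 + 1 := h
      exact Or.inr (Or.inl (by rw [h']; ring))
    · exact Or.inr (Or.inr (Or.inl ⟨hp, h⟩))
    · have h' : x = u.2 + ((ℓ:ℕ) : ZMod n) := h
      exact Or.inr (Or.inr (Or.inr ⟨hp, by rw [h']; ring⟩))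
  by_cases h0 : F 0 = ∅
  · -- S = odd vertices
    have hSodd : ∀ x : ZMod n, ¬ F x = ∅ ↔ x.val % 2 = 1 := by
      intro x
      rw [hparity x]
      have hmod := Nat.mod_two_eq_zero_or_one x.val
      constructor
      · intro hiff
        rcases hmod with hm | hm
        · exact absurd (hiff.mpr hm) (not_not_intro h0)
        · exact hm
      · intro hm
        constructor
        · intro hcon; exact absurd h0 hcon
        · intro he; omega
    have hkey : ∀ u : ZMod n, P u = 1 →
        c u ≠ c (u + 2) ∧ c u + c (u + 2) + c (u + (1 - ((ℓ:ℕ) : ZMod n))) = 0 := by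
      intro u hu
      have hx : F (u + 1) = ∅ := by
        by_contra hcon
        have hodd := (hSodd _).mp hcon
        rw [hoddv, map_add, hu, hP1] at hodd
        exact absurd hodd (by decide)
      have hp2 : P (u + 2) = 1 := by rw [hP2]; exact hu
      have hp3 : P (u + (1 - ((ℓ:ℕ):ZMod n))) = 1 := by
        rw [map_add, map_sub, hP1, hPl, hu]; decide
      obtain ⟨p1, hF1, hc1⟩ := hsingle u (by rw [hSodd, hoddv]; exact hu)
      obtain ⟨p2, hF2, hc2⟩ := hsingle (u+2) (by rw [hSodd, hoddv]; exact hp2)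
      obtain ⟨p3, hF3, hc3⟩ := hsingle (u + (1 - ((ℓ:ℕ):ZMod n)))
        (by rw [hSodd, hoddv]; exact hp3)
      have hcover : ∀ γ : Fin 3, γ = p1 ∨ γ = p2 ∨ γ = p3 := by
        intro γ
        obtain ⟨w, hadj, hγ⟩ := hf (u + 1) hx γ
        rcases hclass (u+1) w hadj with h | h | ⟨hodd', h⟩ | ⟨hodd', h⟩
        · right; left
          have harg : u + 1 + 1 = u + 2 := by ring
          rw [h, harg, hF2] at hγ
          exact Finset.mem_singleton.mp hγ
        · left
          have harg : u + 1 - 1 = u := by ring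
          rw [h, harg, hF1] at hγ
          exact Finset.mem_singleton.mp hγ
        · exfalso
          rw [hoddv, map_add, hu, hP1] at hodd'
          exact absurd hodd' (by decide)
        · right; right
          have harg : u + 1 - ((ℓ:ℕ):ZMod n) = u + (1 - ((ℓ:ℕ):ZMod n)) := by ring
          rw [h, harg, hF3] at hγ
          exact Finset.mem_singleton.mp hγ
      have htri := tri p1 p2 p3 hcover
      rw [← hc1, ← hc2, ← hc3] at htri
      exact htri
    have hQ2' : ∀ x : ZMod n, P x = 1 → P (x+2) = 1 := fun x hx => by rw [hP2]; exact hx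
    have hQs' : ∀ x : ZMod n, P x = 1 → P (x + (1 - ((ℓ:ℕ):ZMod n))) = 1 := by
      intro x hx; rw [map_add, map_sub, hP1, hPl, hx]; decide
    obtain ⟨ha, hgen⟩ := chain (1 - ((ℓ:ℕ):ZMod n)) (fun x => P x = 1) c hQ2' hQs'
      (fun x hx => (hkey x hx).1) (fun x hx => (hkey x hx).2) 1 hP1
    have hcast0 : (1 : ZMod n) + 2 * ((n/2 : ℕ) : ZMod n) = 1 := by
      have e1 : ((2 * (n/2) : ℕ) : ZMod n) = ((n : ℕ) : ZMod n) := by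
        rw [show 2 * (n/2) = n from by omega]
      push_cast at e1
      rw [e1, ZMod.natCast_self]; ring
    have hk1 := hgen (n/2)
    rw [hcast0] at hk1
    have hmul0 : ((n/2 : ℕ) : ZMod 3) * (c (1+2) - c 1) = 0 := by linear_combination hk1.symm
    have h3n : (3:ℕ) ∣ n/2 := by
      rw [← ZMod.natCast_eq_zero_iff]
      exact z3_mul_eq_zero _ _ ha hmul0
    have hn6 : n % 6 = 0 := by omega
    refine ⟨hn6, ?_⟩
    have h2K : 2 * ((n + 1 - ℓ)/2) = n + 1 - ℓ := by omega
    have hKcast : (1:ZMod n) + 2 * (((n + 1 - ℓ)/2 : ℕ) : ZMod n)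
        = 1 + (1 - ((ℓ:ℕ):ZMod n)) := by
      have e1 : ((2 * ((n + 1 - ℓ)/2) : ℕ) : ZMod n) = ((n + 1 - ℓ : ℕ) : ZMod n) := by
        rw [h2K]
      have e2 : ((n + 1 - ℓ : ℕ) : ZMod n) = 1 - ((ℓ:ℕ) : ZMod n) := by
        rw [Nat.cast_sub (by omega)]
        push_cast [ZMod.natCast_self]
        ring
      push_cast at e1
      rw [e2] at e1
      linear_combination e1
    have heq1 := (hkey 1 hP1).2
    have hk2 := hgen ((n + 1 - ℓ)/2)
    rw [hKcast] at hk2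
    have h3c : c 1 + c 1 + c 1 = 0 := z3_three _
    have hfin : ((((n + 1 - ℓ)/2 : ℕ) : ZMod 3) + 1) * (c (1+2) - c 1) = 0 := by
      linear_combination heq1 - hk2 - h3c
    have h3K : (3:ℕ) ∣ (n + 1 - ℓ)/2 + 1 := by
      rw [← ZMod.natCast_eq_zero_iff]
      push_cast
      exact z3_mul_eq_zero _ _ ha hfin
    omega
  · -- S = even vertices, h0 : ¬ F 0 = ∅
    have hSev : ∀ x : ZMod n, ¬ F x = ∅ ↔ x.val % 2 = 0 := by
      intro x
      rw [hparity x]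
      constructor
      · intro hiff; exact hiff.mp h0
      · intro hm; exact ⟨fun _ => hm, fun _ => h0⟩
    have hevv : ∀ x : ZMod n, x.val % 2 = 0 ↔ P x = 0 := fun x => pz_even h2 x
    have hkey : ∀ u : ZMod n, P u = 0 →
        c u ≠ c (u + 2) ∧ c u + c (u + 2) + c (u + (1 + ((ℓ:ℕ) : ZMod n))) = 0 := by
      intro u hu
      have hx : F (u + 1) = ∅ := by
        by_contra hcon
        have hev := (hSev _).mp hcon
        rw [hevv, map_add, hu, hP1] at hev
        exact absurd hev (by decide)
      have hp2 : P (u + 2) = 0 := by rw [hP2]; exact hu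
      have hp3 : P (u + (1 + ((ℓ:ℕ):ZMod n))) = 0 := by
        rw [map_add, map_add, hP1, hPl, hu]; decide
      obtain ⟨p1, hF1, hc1⟩ := hsingle u (by rw [hSev, hevv]; exact hu)
      obtain ⟨p2, hF2, hc2⟩ := hsingle (u+2) (by rw [hSev, hevv]; exact hp2)
      obtain ⟨p3, hF3, hc3⟩ := hsingle (u + (1 + ((ℓ:ℕ):ZMod n)))
        (by rw [hSev, hevv]; exact hp3)
      have hcover : ∀ γ : Fin 3, γ = p1 ∨ γ = p2 ∨ γ = p3 := by
        intro γ
        obtain ⟨w, hadj, hγ⟩ := hf (u + 1) hx γ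
        rcases hclass (u+1) w hadj with h | h | ⟨-, h⟩ | ⟨hodd', h⟩
        · right; left
          have harg : u + 1 + 1 = u + 2 := by ring
          rw [h, harg, hF2] at hγ
          exact Finset.mem_singleton.mp hγ
        · left
          have harg : u + 1 - 1 = u := by ring
          rw [h, harg, hF1] at hγ
          exact Finset.mem_singleton.mp hγ
        · right; right
          have harg : u + 1 + ((ℓ:ℕ):ZMod n) = u + (1 + ((ℓ:ℕ):ZMod n)) := by ring
          rw [h, harg, hF3] at hγ
          exact Finset.mem_singleton.mp hγ
        · exfalso
          rw [hoddv, h, map_sub, map_add, hu, hP1, hPl] at hodd'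
          exact absurd hodd' (by decide)
      have htri := tri p1 p2 p3 hcover
      rw [← hc1, ← hc2, ← hc3] at htri
      exact htri
    have hQ2' : ∀ x : ZMod n, P x = 0 → P (x+2) = 0 := fun x hx => by rw [hP2]; exact hx
    have hQs' : ∀ x : ZMod n, P x = 0 → P (x + (1 + ((ℓ:ℕ):ZMod n))) = 0 := by
      intro x hx; rw [map_add, map_add, hP1, hPl, hx]; decide
    have hP0 : P (0 : ZMod n) = 0 := map_zero P
    obtain ⟨ha, hgen⟩ := chain (1 + ((ℓ:ℕ):ZMod n)) (fun x => P x = 0) c hQ2' hQs'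
      (fun x hx => (hkey x hx).1) (fun x hx => (hkey x hx).2) 0 hP0
    have hcast0 : (0 : ZMod n) + 2 * ((n/2 : ℕ) : ZMod n) = 0 := by
      have e1 : ((2 * (n/2) : ℕ) : ZMod n) = ((n : ℕ) : ZMod n) := by
        rw [show 2 * (n/2) = n from by omega]
      push_cast at e1
      rw [e1, ZMod.natCast_self]; ring
    have hk1 := hgen (n/2)
    rw [hcast0] at hk1
    have hmul0 : ((n/2 : ℕ) : ZMod 3) * (c (0+2) - c 0) = 0 := by linear_combination hk1.symm
    have h3n : (3:ℕ) ∣ n/2 := by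
      rw [← ZMod.natCast_eq_zero_iff]
      exact z3_mul_eq_zero _ _ ha hmul0
    have hn6 : n % 6 = 0 := by omega
    refine ⟨hn6, ?_⟩
    have h2K : 2 * ((ℓ + 1)/2) = ℓ + 1 := by omega
    have hKcast : (0:ZMod n) + 2 * (((ℓ + 1)/2 : ℕ) : ZMod n)
        = 0 + (1 + ((ℓ:ℕ):ZMod n)) := by
      have e1 : ((2 * ((ℓ + 1)/2) : ℕ) : ZMod n) = ((ℓ + 1 : ℕ) : ZMod n) := by
        rw [h2K]
      push_cast at e1
      linear_combination e1
    have heq1 := (hkey 0 hP0).2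
    have hk2 := hgen ((ℓ + 1)/2)
    rw [hKcast] at hk2
    have h3c : c 0 + c 0 + c 0 = 0 := z3_three _
    have hfin : ((((ℓ + 1)/2 : ℕ) : ZMod 3) + 1) * (c (0+2) - c 0) = 0 := by
      linear_combination heq1 - hk2 - h3c
    have h3K : (3:ℕ) ∣ (ℓ + 1)/2 + 1 := by
      rw [← ZMod.natCast_eq_zero_iff]
      push_cast
      exact z3_mul_eq_zero _ _ ha hfin
    omega

def rdrColor : ZMod 6 → Finset (Fin 3) := fun e =>
  if e = 1 then {0} else if e = 3 then {1} else if e = 5 then {2} else ∅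

lemma rdrColor_card : ∀ e : ZMod 6, (rdrColor e).card = if e.val % 2 = 1 then 1 else 0 := by
  decide

lemma rdrColor_cover : ∀ e : ZMod 6, rdrColor e = ∅ → ∀ c : Fin 3,
    c ∈ rdrColor (e+1) ∨ c ∈ rdrColor (e-1) ∨ c ∈ rdrColor (e-3) := by decide

lemma rdrColor_jump_odd : ∀ e : ZMod 6, rdrColor e = ∅ → (e - 3).val % 2 = 1 := by decide

lemma phi_val_parity {n : ℕ} [NeZero n] (h6 : (6:ℕ) ∣ n) (y : ZMod n) :
    (ZMod.castHom h6 (ZMod 6) y).val % 2 = y.val % 2 := by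
  rw [ZMod.castHom_apply, ← ZMod.natCast_val, ZMod.val_natCast]
  exact Nat.mod_mod_of_dvd _ (by norm_num)

lemma card_odd_range : ∀ n : ℕ, (((Finset.range n).filter (fun k => k % 2 = 1)).card) = n / 2 := by
  intro n
  induction n with
  | zero => simp
  | succ m ih =>
    rw [Finset.range_add_one, Finset.filter_insert]
    by_cases h : m % 2 = 1
    · rw [if_pos h, Finset.card_insert_of_notMem (by simp)]
      omega
    · rw [if_neg h]
      omega

open scoped Classical in
lemma card_odd_zmod {n : ℕ} [NeZero n] :
    (univ.filter (fun y : ZMod n => y.val % 2 = 1)).card = n / 2 := by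
  have hb : (univ.filter (fun y : ZMod n => y.val % 2 = 1)).card
      = ((Finset.range n).filter (fun k => k % 2 = 1)).card := by
    apply Finset.card_bij (fun y _ => y.val)
    · intro y hy
      rw [Finset.mem_filter] at *
      exact ⟨Finset.mem_range.mpr (ZMod.val_lt y), hy.2⟩
    · intro y1 h1 y2 h2 he
      exact ZMod.val_injective n he
    · intro k hk
      rw [Finset.mem_filter, Finset.mem_range] at hk
      refine ⟨(k : ZMod n), Finset.mem_filter.mpr ⟨Finset.mem_univ _, ?_⟩, ?_⟩
      · rw [ZMod.val_natCast_of_lt hk.1]; exact hk.2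
      · rw [ZMod.val_natCast_of_lt hk.1]
  rw [hb, card_odd_range]

open scoped Classical in
lemma backward_construction {n ℓ : ℕ} [NeZero n] (hn4 : 4 ≤ n) (hlo : ℓ % 2 = 1)
    (hl2 : 2 * ℓ ≤ n) (hn6 : n % 6 = 0) (hl6 : ℓ % 6 = 3) :
    ∃ f : ZMod 1 × ZMod n → Finset (Fin 3),
      IsKRDF (HTG 1 n ℓ) 3 f ∧ rdfWeight f = n / 2 := by
  have h6 : (6:ℕ) ∣ n := ⟨n/6, by omega⟩
  have hφl : ZMod.castHom h6 (ZMod 6) ((ℓ:ℕ) : ZMod n) = 3 := by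
    rw [map_natCast, ← ZMod.natCast_mod, hl6]
    rfl
  refine ⟨fun v => rdrColor (ZMod.castHom h6 (ZMod 6) v.2), ?_, ?_⟩
  · intro v hv γ
    rcases rdrColor_cover _ hv γ with hc | hc | hc
    · refine ⟨(v.1, v.2 + 1), ?_, ?_⟩
      · rw [HTG1_adj]
        exact ⟨z_self_ne_add_one (by omega) _, Or.inl rfl⟩
      · show γ ∈ rdrColor (ZMod.castHom h6 (ZMod 6) (v.2 + 1))
        rw [map_add, map_one]
        exact hc
    · refine ⟨(v.1, v.2 - 1), ?_, ?_⟩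
      · rw [HTG1_adj]
        exact ⟨z_self_ne_sub_one (by omega) _, Or.inr (Or.inl (by ring))⟩
      · show γ ∈ rdrColor (ZMod.castHom h6 (ZMod 6) (v.2 - 1))
        rw [map_sub, map_one]
        exact hc
    · have hφv : ZMod.castHom h6 (ZMod 6) (v.2 - ((ℓ:ℕ) : ZMod n))
          = ZMod.castHom h6 (ZMod 6) v.2 - 3 := by
        rw [map_sub, hφl]
      refine ⟨(v.1, v.2 - ((ℓ:ℕ) : ZMod n)), ?_, ?_⟩
      · rw [HTG1_adj]
        refine ⟨?_, Or.inr (Or.inr (Or.inr ⟨?_, by ring⟩))⟩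
        · intro hcon
          have hz : ((ℓ:ℕ) : ZMod n) = 0 := by linear_combination hcon
          exact zl_ne_zero (by omega) (by omega) hz
        · show (v.2 - ((ℓ:ℕ) : ZMod n)).val % 2 = 1
          rw [← phi_val_parity h6, hφv]
          exact rdrColor_jump_odd _ hv
      · show γ ∈ rdrColor (ZMod.castHom h6 (ZMod 6) (v.2 - ((ℓ:ℕ) : ZMod n)))
        rw [hφv]
        exact hc
  · rw [rdfWeight, Fintype.sum_prod_type]
    have hterm : ∀ y : ZMod n, (rdrColor (ZMod.castHom h6 (ZMod 6) y)).card
        = if y.val % 2 = 1 then 1 else 0 := by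
      intro y
      rw [rdrColor_card, phi_val_parity h6]
    have hinner : ∑ y : ZMod n, (rdrColor (ZMod.castHom h6 (ZMod 6) y)).card = n / 2 := by
      calc ∑ y : ZMod n, (rdrColor (ZMod.castHom h6 (ZMod 6) y)).card
          = ∑ y : ZMod n, if y.val % 2 = 1 then 1 else 0 :=
            Finset.sum_congr rfl (fun y _ => hterm y)
        _ = (univ.filter (fun y : ZMod n => y.val % 2 = 1)).card := by
            rw [Finset.sum_boole]
            simp
        _ = n / 2 := card_odd_zmod
    rw [Finset.sum_congr rfl (fun a _ => hinner)]
    rw [Finset.sum_const, Finset.card_univ, ZMod.card]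
    simp

/-- `HTG(1,n,ℓ)` (with `n ≥ 4` even, `ℓ` odd, `0 ≤ ℓ ≤ n/2`) is `3`-RDR iff
`n ≡ 0 (mod 6)` and `ℓ ≡ 3 (mod 6)`. -/
theorem HTG1_is3RDR_iff (n ℓ : ℕ) [NeZero n] (hn4 : 4 ≤ n) (hne : n % 2 = 0)
    (hlo : ℓ % 2 = 1) (hl2 : 2 * ℓ ≤ n) :
    Is3RDR (HTG 1 n ℓ) ↔ (n % 6 = 0 ∧ ℓ % 6 = 3) := by
  classical
  have hcardV : Fintype.card (ZMod 1 × ZMod n) = n := by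
    rw [Fintype.card_prod, ZMod.card, ZMod.card, one_mul]
  constructor
  · rintro ⟨hreg, hdom⟩
    have hSne : {w | ∃ f, IsKRDF (HTG 1 n ℓ) 3 f ∧ rdfWeight f = w}.Nonempty := by
      have htriv : IsKRDF (HTG 1 n ℓ) 3 (fun _ => (univ : Finset (Fin 3))) := by
        intro v hv c
        have hne2 : (univ : Finset (Fin 3)) ≠ ∅ := by decide
        exact absurd hv hne2
      exact ⟨rdfWeight (fun _ => (univ : Finset (Fin 3))), fun _ => univ, htriv, rfl⟩
    obtain ⟨f, hf, hwf⟩ := Nat.sInf_mem hSne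
    have heq : 2 * rdfWeight f = Fintype.card (ZMod 1 × ZMod n) := by
      rw [hwf]
      exact hdom
    obtain ⟨-, hEq⟩ := rdf_counting _ hreg f hf
    obtain ⟨H1, H2, H3⟩ := hEq heq
    set F : ZMod n → Finset (Fin 3) := fun x => f ((0:ZMod 1), x) with hFdef
    have hfF : ∀ v : ZMod 1 × ZMod n, f v = F v.2 := by
      intro v
      rw [hFdef]
      exact congrArg f (Prod.ext (Subsingleton.elim _ _) rfl)
    apply forward_analysis hn4 hne hlo hl2 F
    · intro x hx γ
      obtain ⟨u, hadj, hγ⟩ := hf ((0:ZMod 1), x) (by rw [hfF]; exact hx) γ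
      exact ⟨u, hadj, by rw [← hfF]; exact hγ⟩
    · intro x hx
      have h := H1 ((0:ZMod 1), x) (by rw [hfF]; exact hx)
      rw [hfF] at h
      exact h
    · intro x y hx hadj
      have h := H2 ((0:ZMod 1), x) ((0:ZMod 1), y) (by rw [hfF]; exact hx) hadj
      rw [hfF] at h
      exact h
    · have hbij : (univ.filter (fun v : ZMod 1 × ZMod n => ¬ f v = ∅)).card
          = (univ.filter (fun x : ZMod n => ¬ F x = ∅)).card := by
        apply Finset.card_bij (fun v _ => v.2)
        · intro v hv
          rw [Finset.mem_filter] at *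
          refine ⟨Finset.mem_univ _, ?_⟩
          rw [← hfF v]
          exact hv.2
        · intro v1 h1 v2 h2 he
          exact Prod.ext (Subsingleton.elim _ _) he
        · intro x hx
          rw [Finset.mem_filter] at hx
          exact ⟨((0:ZMod 1), x),
            Finset.mem_filter.mpr ⟨Finset.mem_univ _, by rw [hfF]; exact hx.2⟩, rfl⟩
      rw [← hbij, H3, hcardV]
  · rintro ⟨hn6, hl6⟩
    have hl3 : 3 ≤ ℓ := by omega
    have hreg := HTG1_regular hn4 hne hlo hl2 hl3
    refine ⟨hreg, ?_⟩
    obtain ⟨f0, hf0, hw0⟩ := backward_construction hn4 hlo hl2 hn6 hl6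
    have hub : rainbowDomNum (HTG 1 n ℓ) 3 ≤ n / 2 := by
      apply Nat.sInf_le
      exact ⟨f0, hf0, hw0⟩
    have hlb : n / 2 ≤ rainbowDomNum (HTG 1 n ℓ) 3 := by
      have hnonempty : {w | ∃ f, IsKRDF (HTG 1 n ℓ) 3 f ∧ rdfWeight f = w}.Nonempty :=
        ⟨rdfWeight f0, f0, hf0, rfl⟩
      refine le_csInf hnonempty ?_
      rintro w ⟨f, hf, rfl⟩
      have hc := (rdf_counting _ hreg f hf).1
      rw [hcardV] at hc
      omega
    rw [hcardV]
    omega
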